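/- If R is a right Kasch ring (every simple right R-module embeds into R), then the right annihilator of the right socle equals the Jacobson radical: r(soc(R_R)) = J(R). -/

import Mathlib

universe u

/-- The right annihilator of a subset `X` of a ring. -/
def rAnn {R : Type*} [Ring R] (X : Set R) : Set R := {a | ∀ x ∈ X, x * a = 0}

/-- The right socle of `R`: the sum of all simple right ideals. -/
def rightSocle (R : Type*) [Ring R] : Submodule Rᵐᵒᵖ R :=
  sSup {T : Submodule Rᵐᵒᵖ R | IsSimpleModule Rᵐᵒᵖ ↥T}

/-- `R` is right Kasch: every simple right `R`-module is isomorphic to a right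
ideal of `R`. -/
def RightKasch (R : Type u) [Ring R] : Prop :=
  ∀ (M : Type u) [AddCommGroup M] [Module Rᵐᵒᵖ M], IsSimpleModule Rᵐᵒᵖ M →
    ∃ T : Submodule Rᵐᵒᵖ R, Nonempty (M ≃ₗ[Rᵐᵒᵖ] ↥T)


open MulOpposite

lemma isUnit_mul_add_one_comm {R : Type*} [Ring R] {a b : R}
    (h : IsUnit (a * b + 1)) : IsUnit (b * a + 1) := by
  obtain ⟨u, hu⟩ := h
  set v : R := ↑u⁻¹ with hv
  have h1 : (a * b + 1) * v = 1 := by rw [← hu, hv]; exact u.mul_inv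
  have h2 : v * (a * b + 1) = 1 := by rw [← hu, hv]; exact u.inv_mul
  refine ⟨⟨b * a + 1, 1 - b * v * a, ?_, ?_⟩, rfl⟩
  · calc (b * a + 1) * (1 - b * v * a)
        = 1 + b * a - b * ((a * b + 1) * v) * a := by noncomm_ring
      _ = 1 := by rw [h1]; noncomm_ring
  · calc (1 - b * v * a) * (b * a + 1)
        = 1 + b * a - b * (v * (a * b + 1)) * a := by noncomm_ring
      _ = 1 := by rw [h2]; noncomm_ring

lemma mem_jacobson_bot_iff_unit {R : Type*} [Ring R] {a : R} :
    a ∈ Ideal.jacobson (⊥ : Ideal R) ↔ ∀ y, IsUnit (y * a + 1) := by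
  constructor
  · intro ha y
    obtain ⟨z, hz⟩ := Ideal.mem_jacobson_iff.1 ha y
    rw [Ideal.mem_bot, sub_eq_zero] at hz
    have hz' : z * (y * a + 1) = 1 := by
      calc z * (y * a + 1) = z * y * a + z := by noncomm_ring
        _ = 1 := hz
    obtain ⟨w, hw⟩ := Ideal.mem_jacobson_iff.1 ha (-(z * y))
    rw [Ideal.mem_bot, sub_eq_zero] at hw
    have hwz : w * z = 1 := by
      have h3 : w * ((-(z * y)) * a + 1) = 1 := by
        calc w * ((-(z * y)) * a + 1) = w * -(z * y) * a + w := by noncomm_ring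
          _ = 1 := hw
      have hzz : (-(z * y)) * a + 1 = z := by
        have : z * y * a + z - (z * y * a) = 1 - z * y * a := by rw [hz]
        calc (-(z * y)) * a + 1 = 1 - z * y * a := by noncomm_ring
          _ = z := by rw [← hz]; noncomm_ring
      rwa [hzz] at h3
    have huz : (y * a + 1) * z = 1 := by
      have : w = y * a + 1 := by
        calc w = w * (z * (y * a + 1)) := by rw [hz', mul_one]
          _ = (w * z) * (y * a + 1) := by rw [mul_assoc]
          _ = y * a + 1 := by rw [hwz, one_mul]
      rw [← this, hwz]
    exact ⟨⟨y * a + 1, z, huz, hz'⟩, rfl⟩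
  · intro hy
    rw [Ideal.mem_jacobson_iff]
    intro y
    obtain ⟨u, hu⟩ := hy y
    refine ⟨↑u⁻¹, ?_⟩
    rw [Ideal.mem_bot, sub_eq_zero]
    calc (↑u⁻¹ : R) * y * a + ↑u⁻¹ = ↑u⁻¹ * (y * a + 1) := by noncomm_ring
      _ = 1 := by rw [← hu]; exact u.inv_mul

lemma op_mem_jacobson_bot_iff {R : Type*} [Ring R] {a : R} :
    op a ∈ Ideal.jacobson (⊥ : Ideal Rᵐᵒᵖ) ↔ a ∈ Ideal.jacobson (⊥ : Ideal R) := by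
  simp only [mem_jacobson_bot_iff_unit]
  constructor
  · intro h y
    have := h (op y)
    rw [show (op y) * (op a) + 1 = op (a * y + 1) by simp, isUnit_op] at this
    exact isUnit_mul_add_one_comm this
  · intro h y
    rw [show y * (op a) + 1 = op (a * y.unop + 1) by simp, isUnit_op]
    exact isUnit_mul_add_one_comm (h y.unop)

/-- If `R` is right Kasch, then the right annihilator of the right socle equals
the Jacobson radical: `r(soc(R_R)) = J(R)`. -/
theorem stmt11 {R : Type u} [Ring R] (h : RightKasch R) :
    rAnn (rightSocle R : Set R) = (Ideal.jacobson (⊥ : Ideal R) : Set R) := by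
  ext a
  simp only [rAnn, Set.mem_setOf_eq, SetLike.mem_coe]
  constructor
  · -- rAnn ⊆ J : contrapositive
    intro ha
    by_contra haJ
    rw [← op_mem_jacobson_bot_iff] at haJ
    have : ¬ ∀ m ∈ {J : Ideal Rᵐᵒᵖ | (⊥ : Ideal Rᵐᵒᵖ) ≤ J ∧ J.IsMaximal}, op a ∈ m := by
      intro hall
      exact haJ (Submodule.mem_sInf.2 hall)
    push_neg at this
    obtain ⟨m, ⟨-, hmax⟩, ham⟩ := this
    haveI : IsSimpleModule Rᵐᵒᵖ (Rᵐᵒᵖ ⧸ m) :=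
      isSimpleModule_iff_isCoatom.2 (Ideal.isMaximal_def.1 hmax)
    obtain ⟨T, ⟨e⟩⟩ := h (Rᵐᵒᵖ ⧸ m) inferInstance
    haveI : IsSimpleModule Rᵐᵒᵖ T := IsSimpleModule.congr e.symm
    have hTsoc : T ≤ rightSocle R := le_sSup (by exact ‹IsSimpleModule Rᵐᵒᵖ T›)
    set t0 : T := e (Submodule.Quotient.mk 1) with ht0
    have hq : (Submodule.Quotient.mk (op a) : Rᵐᵒᵖ ⧸ m) ≠ 0 := by
      rw [Ne, Submodule.Quotient.mk_eq_zero]; exact ham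
    have hsm : op a • t0 = e (Submodule.Quotient.mk (op a)) := by
      rw [ht0, ← map_smul]
      exact congrArg e (by rw [← Submodule.Quotient.mk_smul, smul_eq_mul, mul_one])
    have hne : op a • t0 ≠ 0 := by
      rw [hsm]
      exact fun h0 => hq (e.injective (by simpa using h0))
    have hval : (t0 : R) * a = ((op a • t0 : T) : R) := by
      rw [Submodule.coe_smul, op_smul_eq_mul]
    have := ha (t0 : R) (hTsoc t0.2)
    rw [hval] at this
    exact hne (by exact_mod_cast Subtype.ext this)
  · -- J ⊆ rAnn
    intro ha x hx
    rw [← op_mem_jacobson_bot_iff] at ha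
    -- the left annihilator of J(Rᵐᵒᵖ) as a right ideal of R
    set Jop := Ideal.jacobson (⊥ : Ideal Rᵐᵒᵖ) with hJop
    have hJop_mul : ∀ {b m : Rᵐᵒᵖ}, b ∈ Jop → b * m ∈ Jop := fun {b m} hb =>
      Ideal.mul_mem_right m (Ideal.jacobson (⊥ : Ideal Rᵐᵒᵖ)) hb
    let K : Submodule Rᵐᵒᵖ R :=
      { carrier := {x : R | ∀ b ∈ Jop, x * b.unop = 0}
        add_mem' := fun {x y} hx hy b hb => by rw [add_mul, hx b hb, hy b hb, add_zero]
        zero_mem' := fun b _ => zero_mul _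
        smul_mem' := fun m x hx b hb => by
          have h1 : m • x = x * m.unop := rfl
          rw [h1, mul_assoc, ← MulOpposite.unop_mul]
          exact hx (b * m) (hJop_mul hb) }
    have hsoc : rightSocle R ≤ K := by
      refine sSup_le fun T hT => ?_
      haveI : IsSimpleModule Rᵐᵒᵖ T := hT
      intro x hxT b hb
      by_cases hx0 : x = 0
      · rw [hx0, zero_mul]
      · have hx0' : (⟨x, hxT⟩ : T) ≠ 0 := fun hc => hx0 (congrArg Subtype.val hc)
        have hmax := IsSimpleModule.ker_toSpanSingleton_isMaximal Rᵐᵒᵖ (M := T) hx0'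
        have hle : Jop ≤ LinearMap.ker (LinearMap.toSpanSingleton Rᵐᵒᵖ T ⟨x, hxT⟩) :=
          sInf_le ⟨bot_le, hmax⟩
        have h2 : b • (⟨x, hxT⟩ : T) = 0 := by
          have h3 := hle hb
          rwa [LinearMap.mem_ker, LinearMap.toSpanSingleton_apply] at h3
        have h4 : b • x = 0 := by simpa using congrArg Subtype.val h2
        rwa [show b • x = x * b.unop from rfl] at h4
    have := hsoc hx (op a) ha
    simpa using this
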